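/- Let G be a connected cograph such that \bar{G} has k ≥ 2 nontrivial components and t trivial components. Then the geodetic hull number of the complementary prism satisfies h(G\bar{G}) = k + t + 1. -/

import Mathlib

open SimpleGraph

/-- The geodetic closed interval `I[u,v]`: `u`, `v`, and all vertices lying on
some shortest `u`–`v` path. -/
def geoInterval {V : Type*} (G : SimpleGraph V) (u v : V) : Set V :=
  {w | w = u ∨ w = v ∨ (G.Reachable u v ∧ G.dist u w + G.dist w v = G.dist u v)}

/-- A set is geodetically convex if it is closed under intervals. -/
def IsGeoConvex {V : Type*} (G : SimpleGraph V) (S : Set V) : Prop :=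
  ∀ u ∈ S, ∀ v ∈ S, geoInterval G u v ⊆ S

/-- The geodetic convex hull: the smallest convex set containing `S`. -/
def geoHull {V : Type*} (G : SimpleGraph V) (S : Set V) : Set V :=
  ⋂₀ {T | IsGeoConvex G T ∧ S ⊆ T}

/-- `S` is a hull set if its convex hull is the whole vertex set. -/
def IsHullSet {V : Type*} (G : SimpleGraph V) (S : Set V) : Prop :=
  geoHull G S = Set.univ

/-- The geodetic hull number: minimum cardinality of a hull set. -/
noncomputable def hullNumber {V : Type*} (G : SimpleGraph V) : ℕ :=
  sInf {n | ∃ S : Set V, S.ncard = n ∧ IsHullSet G S}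

/-- A vertex is simplicial if its closed neighborhood induces a clique. -/
def IsSimplicial {V : Type*} (G : SimpleGraph V) (v : V) : Prop :=
  ∀ a ∈ G.neighborSet v, ∀ b ∈ G.neighborSet v, a ≠ b → G.Adj a b

/-- The complementary prism `G G̅`: disjoint union of `G` (left copies) and its
complement (right copies), plus a perfect matching between corresponding vertices. -/
def compPrism {V : Type*} (G : SimpleGraph V) : SimpleGraph (V ⊕ V) where
  Adj x y :=
    match x, y with
    | .inl u, .inl w => G.Adj u w
    | .inr u, .inr w => u ≠ w ∧ ¬ G.Adj u w
    | .inl u, .inr w => u = w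
    | .inr u, .inl w => u = w
  symm := by
    constructor
    rintro (u | u) (w | w) h
    · exact h.symm
    · exact h.symm
    · exact h.symm
    · exact ⟨h.1.symm, fun a => h.2 a.symm⟩
  loopless := by
    constructor
    rintro (u | u) h
    · exact (G.ne_of_adj h) rfl
    · exact h.1 rfl

/-- A cograph: a graph with no induced path on four vertices. -/
def IsCograph {V : Type*} (G : SimpleGraph V) : Prop :=
  ∀ a b c d : V,
    ¬ (G.Adj a b ∧ G.Adj b c ∧ G.Adj c d ∧ ¬ G.Adj a c ∧ ¬ G.Adj a d ∧ ¬ G.Adj b d)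

namespace CPaux

open Sum

/-! ### generic hull facts -/

variable {V : Type*}

lemma subset_geoHull (G : SimpleGraph V) (S : Set V) : S ⊆ geoHull G S :=
  fun _x hx _T hT => hT.2 hx

lemma isGeoConvex_geoHull (G : SimpleGraph V) (S : Set V) :
    IsGeoConvex G (geoHull G S) := by
  intro u hu v hv w hw T hT
  exact hT.1 u (hu T hT) v (hv T hT) hw

lemma geoHull_min {G : SimpleGraph V} {S T : Set V} (hT : IsGeoConvex G T)
    (hST : S ⊆ T) : geoHull G S ⊆ T :=
  Set.sInter_subset_of_mem ⟨hT, hST⟩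

lemma isGeoConvex_univ (G : SimpleGraph V) : IsGeoConvex G (Set.univ : Set V) :=
  fun _ _ _ _ _ _ => Set.mem_univ _

/-! ### generic distance facts -/

lemma dist_eq_two_of {W : Type*} {H : SimpleGraph W} {a b m : W} (hne : a ≠ b)
    (hna : ¬ H.Adj a b) (h1 : H.Adj a m) (h2 : H.Adj m b) : H.dist a b = 2 := by
  have hle : H.dist a b ≤ 2 := by
    have := SimpleGraph.dist_le (Walk.cons h1 (Walk.cons h2 Walk.nil))
    simpa using this
  have hr : H.Reachable a b := ⟨Walk.cons h1 (Walk.cons h2 Walk.nil)⟩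
  have h0 : H.dist a b ≠ 0 := fun h => hne (hr.dist_eq_zero_iff.mp h)
  have h1' : H.dist a b ≠ 1 := fun h => hna (SimpleGraph.dist_eq_one_iff_adj.mp h)
  omega

lemma exists_mid_of_dist_two {W : Type*} {H : SimpleGraph W} {a b : W}
    (h : H.dist a b = 2) : ∃ m, H.Adj a m ∧ H.Adj m b := by
  obtain ⟨p, hp⟩ := SimpleGraph.exists_walk_of_dist_ne_zero
    (by omega : H.dist a b ≠ 0)
  rw [h] at hp
  cases p with
  | nil => simp at hp
  | cons h1 q =>
    cases q with
    | nil => simp at hp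
    | cons h2 r =>
      cases r with
      | nil => exact ⟨_, h1, h2⟩
      | cons h3 s => simp [Walk.length_cons] at hp

lemma dist_eq_three_of {W : Type*} {H : SimpleGraph W} {a b : W} (hne : a ≠ b)
    (hna : ¬ H.Adj a b) (hmid : ∀ m, H.Adj a m → H.Adj m b → False)
    (p : H.Walk a b) (hp : p.length = 3) : H.dist a b = 3 := by
  have hle : H.dist a b ≤ 3 := hp ▸ SimpleGraph.dist_le p
  have hr : H.Reachable a b := ⟨p⟩
  have h0 : H.dist a b ≠ 0 := fun h => hne (hr.dist_eq_zero_iff.mp h)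
  have h1' : H.dist a b ≠ 1 := fun h => hna (SimpleGraph.dist_eq_one_iff_adj.mp h)
  have h2' : H.dist a b ≠ 2 := by
    intro h
    obtain ⟨m, hm1, hm2⟩ := exists_mid_of_dist_two h
    exact hmid m hm1 hm2
  omega

/-! ### complementary prism basics -/

variable {G : SimpleGraph V}

lemma adj_ll {u v : V} : (compPrism G).Adj (.inl u) (.inl v) ↔ G.Adj u v := Iff.rfl
lemma adj_rr {u v : V} : (compPrism G).Adj (.inr u) (.inr v) ↔ (u ≠ v ∧ ¬ G.Adj u v) := Iff.rfl
lemma adj_lr {u v : V} : (compPrism G).Adj (.inl u) (.inr v) ↔ u = v := Iff.rfl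
lemma adj_rl {u v : V} : (compPrism G).Adj (.inr u) (.inl v) ↔ u = v := Iff.rfl

lemma adj_rr' {u v : V} : (compPrism G).Adj (.inr u) (.inr v) ↔ Gᶜ.Adj u v := by
  rw [adj_rr, G.compl_adj]

lemma reach_left {u v : V} (h : G.Reachable u v) :
    (compPrism G).Reachable (.inl u) (.inl v) := by
  obtain ⟨p⟩ := h
  induction p with
  | nil => rfl
  | cons h q ih => exact (Reachable.trans ⟨Walk.cons (adj_ll.2 h) Walk.nil⟩ ih)

lemma prism_preconnected (hconn : G.Connected) :
    ∀ a b : V ⊕ V, (compPrism G).Reachable a b := by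
  have key : ∀ (u : V) (b : V ⊕ V), (compPrism G).Reachable (.inl u) b := by
    intro u b
    cases b with
    | inl v => exact reach_left (hconn u v)
    | inr v =>
      exact (reach_left (hconn u v)).trans (SimpleGraph.Adj.reachable (adj_lr.2 rfl))
  intro a b
  cases a with
  | inl u => exact key u b
  | inr u => exact ((key u (.inr u)).symm).trans (key u b)

/-! ### component facts -/

lemma adj_of_comp_ne {u v : V} (h : Gᶜ.connectedComponentMk u ≠ Gᶜ.connectedComponentMk v) :
    G.Adj u v := by
  have hne : u ≠ v := fun e => h (by rw [e])
  by_contra hna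
  exact h (SimpleGraph.ConnectedComponent.connectedComponentMk_eq_of_adj (G := Gᶜ) ((G.compl_adj u v).2 ⟨hne, hna⟩))

lemma not_cadj_of_comp_ne {u v : V} (h : Gᶜ.connectedComponentMk u ≠ Gᶜ.connectedComponentMk v) :
    ¬ Gᶜ.Adj u v := fun ha => h (SimpleGraph.ConnectedComponent.connectedComponentMk_eq_of_adj (G := Gᶜ) ha)

lemma exists_common_nbr (hex : ∀ C : Gᶜ.ConnectedComponent, ∃ D, D ≠ C)
    {u v : V} (hne : u ≠ v) (hna : ¬ G.Adj u v) :
    ∃ w, G.Adj u w ∧ G.Adj w v := by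
  have hc : Gᶜ.connectedComponentMk u = Gᶜ.connectedComponentMk v :=
    SimpleGraph.ConnectedComponent.connectedComponentMk_eq_of_adj (G := Gᶜ) ((G.compl_adj u v).2 ⟨hne, hna⟩)
  obtain ⟨D, hD⟩ := hex (Gᶜ.connectedComponentMk u)
  refine ⟨Quot.out D, ?_, ?_⟩
  · refine adj_of_comp_ne fun e => hD ?_
    have hout : Gᶜ.connectedComponentMk (Quot.out D) = D := Quot.out_eq D
    rw [← hout, ← e]
  · refine adj_of_comp_ne fun e => hD ?_
    have hout : Gᶜ.connectedComponentMk (Quot.out D) = D := Quot.out_eq D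
    rw [← hout, e, ← hc]

lemma exists_cnbr_of_reachable_ne {u v : V} (h : Gᶜ.Reachable u v) (hne : u ≠ v) :
    ∃ w, Gᶜ.Adj u w := by
  obtain ⟨p⟩ := h
  cases p with
  | nil => exact absurd rfl hne
  | cons h q => exact ⟨_, h⟩

/-! ### distances in the prism -/

section Dist

variable (hconn : G.Connected)

lemma dist_match (u : V) : (compPrism G).dist (.inl u) (.inr u) = 1 :=
  SimpleGraph.dist_eq_one_iff_adj.2 (adj_lr.2 rfl)

lemma dist_lr {u v : V} (hne : u ≠ v) :
    (compPrism G).dist (.inl u) (.inr v) = 2 := by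
  by_cases h : G.Adj u v
  · exact dist_eq_two_of (by simp) (by simp [adj_lr, hne]) (adj_ll.2 h) (adj_lr.2 rfl)
  · exact dist_eq_two_of (by simp) (by simp [adj_lr, hne]) (adj_lr.2 rfl) (adj_rr.2 ⟨hne, h⟩)

lemma dist_lr_le_two (u v : V) : (compPrism G).dist (.inl u) (.inr v) ≤ 2 := by
  by_cases hne : u = v
  · subst hne; rw [dist_match]; omega
  · rw [dist_lr hne]

lemma dist_ll_le_two (hex : ∀ C : Gᶜ.ConnectedComponent, ∃ D, D ≠ C) (u v : V) :
    (compPrism G).dist (.inl u) (.inl v) ≤ 2 := by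
  by_cases he : u = v
  · subst he; rw [SimpleGraph.dist_self]; omega
  by_cases h : G.Adj u v
  · rw [SimpleGraph.dist_eq_one_iff_adj.2 (adj_ll.2 h)]; omega
  · obtain ⟨w, h1, h2⟩ := exists_common_nbr hex he h
    rw [dist_eq_two_of (by simp [he]) (by simpa [adj_ll] using h)
      (adj_ll.2 h1) (adj_ll.2 h2)]

lemma dist_ll_two (hex : ∀ C : Gᶜ.ConnectedComponent, ∃ D, D ≠ C) {u v : V}
    (hne : u ≠ v) (hna : ¬ G.Adj u v) :
    (compPrism G).dist (.inl u) (.inl v) = 2 := by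
  obtain ⟨w, h1, h2⟩ := exists_common_nbr hex hne hna
  exact dist_eq_two_of (by simp [hne]) (by simpa [adj_ll] using hna)
    (adj_ll.2 h1) (adj_ll.2 h2)

lemma dist_rr_le_three (u v : V) :
    (compPrism G).dist (.inr u) (.inr v) ≤ 3 := by
  by_cases he : u = v
  · subst he; rw [SimpleGraph.dist_self]; omega
  by_cases h : G.Adj u v
  · have := SimpleGraph.dist_le (Walk.cons (adj_rl.2 rfl)
      (Walk.cons (adj_ll.2 h) (Walk.cons (adj_lr.2 rfl) (Walk.nil (G := compPrism G) (u := .inr v)))))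
    simpa using this
  · rw [SimpleGraph.dist_eq_one_iff_adj.2 (adj_rr.2 ⟨he, h⟩)]; omega

lemma dist_rr_three {u v : V}
    (h : Gᶜ.connectedComponentMk u ≠ Gᶜ.connectedComponentMk v) :
    (compPrism G).dist (.inr u) (.inr v) = 3 := by
  have hne : u ≠ v := fun e => h (by rw [e])
  have hG : G.Adj u v := adj_of_comp_ne h
  refine dist_eq_three_of (by simp [hne]) ?_ ?_
    (Walk.cons (adj_rl.2 rfl) (Walk.cons (adj_ll.2 hG) (Walk.cons (adj_lr.2 rfl) Walk.nil)))
    (by simp)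
  · rw [adj_rr]
    rintro ⟨-, hna⟩; exact hna hG
  · rintro (m | m) h1 h2
    · exact hne ((adj_rl.1 h1).trans (adj_lr.1 h2))
    · have c1 := SimpleGraph.ConnectedComponent.connectedComponentMk_eq_of_adj (G := Gᶜ) (adj_rr'.1 h1)
      have c2 := SimpleGraph.ConnectedComponent.connectedComponentMk_eq_of_adj (G := Gᶜ) (adj_rr'.1 h2)
      exact h (c1.trans c2)

end Dist

/-! ### convexity lemmas -/

section Conv

variable (hconn : G.Connected)
include hconn

lemma one_le_dist {a b : V ⊕ V} (h : a ≠ b) : 1 ≤ (compPrism G).dist a b :=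
  (prism_preconnected hconn a b).pos_dist_of_ne h

lemma two_le_dist_rr {x q : V}
    (h : Gᶜ.connectedComponentMk x ≠ Gᶜ.connectedComponentMk q) :
    2 ≤ (compPrism G).dist (.inr x) (.inr q) := by
  have hne : x ≠ q := fun e => h (by rw [e])
  have h1 := one_le_dist hconn (a := (Sum.inr x : V ⊕ V)) (b := .inr q) (by simp [hne])
  have h2 : (compPrism G).dist (.inr x) (.inr q) ≠ 1 := by
    intro e
    exact not_cadj_of_comp_ne h (adj_rr'.1 (SimpleGraph.dist_eq_one_iff_adj.1 e))
  omega

lemma conv_compl_supp (hex : ∀ C : Gᶜ.ConnectedComponent, ∃ D, D ≠ C)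
    (C : Gᶜ.ConnectedComponent) :
    IsGeoConvex (compPrism G) ((Sum.inr '' C.supp)ᶜ) := by
  intro a ha b hb w hw
  rcases hw with rfl | rfl | ⟨hr, heq⟩
  · exact ha
  · exact hb
  intro hwmem
  obtain ⟨x, hxsupp, rfl⟩ := hwmem
  have hax : a ≠ Sum.inr x := fun e => ha (e ▸ ⟨x, hxsupp, rfl⟩)
  have hbx : b ≠ Sum.inr x := fun e => hb (e ▸ ⟨x, hxsupp, rfl⟩)
  have h1 : 1 ≤ (compPrism G).dist a (.inr x) := one_le_dist hconn hax
  have h2 : 1 ≤ (compPrism G).dist (.inr x) b := by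
    rw [SimpleGraph.dist_comm]; exact one_le_dist hconn hbx
  cases a with
  | inl p =>
    cases b with
    | inl q =>
      have hub := dist_ll_le_two hex p q
      have e1 : (compPrism G).dist (.inl p) (.inr x) = 1 := by omega
      have e2 : (compPrism G).dist (.inr x) (.inl q) = 1 := by omega
      have hpx : p = x := adj_lr.1 (SimpleGraph.dist_eq_one_iff_adj.1 e1)
      have hxq : x = q := adj_rl.1 (SimpleGraph.dist_eq_one_iff_adj.1 e2)
      subst hpx; subst hxq
      rw [SimpleGraph.dist_self] at heq
      omega
    | inr q =>
      have hq : q ∉ C.supp := fun h => hb ⟨q, h, rfl⟩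
      have hcomp : Gᶜ.connectedComponentMk x ≠ Gᶜ.connectedComponentMk q := by
        rw [SimpleGraph.ConnectedComponent.mem_supp_iff] at hxsupp hq
        rw [hxsupp]
        exact fun e => hq e.symm
      have h2' := two_le_dist_rr hconn hcomp
      have hub := dist_lr_le_two (G := G) p q
      omega
  | inr p =>
    have hp : p ∉ C.supp := fun h => ha ⟨p, h, rfl⟩
    have hcomp : Gᶜ.connectedComponentMk p ≠ Gᶜ.connectedComponentMk x := by
      rw [SimpleGraph.ConnectedComponent.mem_supp_iff] at hxsupp hp
      rw [hxsupp]
      exact hp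
    have h1' := two_le_dist_rr hconn hcomp
    cases b with
    | inl q =>
      have hub : (compPrism G).dist (.inr p) (.inl q) ≤ 2 := by
        rw [SimpleGraph.dist_comm]; exact dist_lr_le_two q p
      omega
    | inr q =>
      have hub := dist_rr_le_three (G := G) p q
      have hq : q ∉ C.supp := fun h => hb ⟨q, h, rfl⟩
      have hcomp2 : Gᶜ.connectedComponentMk x ≠ Gᶜ.connectedComponentMk q := by
        rw [SimpleGraph.ConnectedComponent.mem_supp_iff] at hxsupp hq
        rw [hxsupp]
        exact fun e => hq e.symm
      have h2' := two_le_dist_rr hconn hcomp2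
      omega

lemma conv_pair {A : Set V}
    (hA : ∀ x ∈ A, ∀ y ∈ A, x ≠ y →
      Gᶜ.connectedComponentMk x ≠ Gᶜ.connectedComponentMk y) :
    IsGeoConvex (compPrism G) (Sum.inl '' A ∪ Sum.inr '' A) := by
  intro a ha b hb w hw
  rcases hw with rfl | rfl | ⟨hr, heq⟩
  · exact ha
  · exact hb
  by_cases hwa : w = a
  · subst hwa; exact ha
  by_cases hwb : w = b
  · subst hwb; exact hb
  have h1 : 1 ≤ (compPrism G).dist a w := one_le_dist hconn (fun e => hwa e.symm)
  have h2 : 1 ≤ (compPrism G).dist w b := one_le_dist hconn hwb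
  obtain ⟨x, hx, (rfl : Sum.inl x = a)⟩ | ⟨x, hx, (rfl : Sum.inr x = a)⟩ := ha
  all_goals obtain ⟨y, hy, (rfl : Sum.inl y = b)⟩ | ⟨y, hy, (rfl : Sum.inr y = b)⟩ := hb
  · -- inl x, inl y
    by_cases hxy : x = y
    · subst hxy; rw [SimpleGraph.dist_self] at heq; omega
    · have hd : (compPrism G).dist (.inl x) (.inl y) = 1 :=
        SimpleGraph.dist_eq_one_iff_adj.2 (adj_ll.2 (adj_of_comp_ne (hA x hx y hy hxy)))
      omega
  · -- inl x, inr y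
    by_cases hxy : x = y
    · subst hxy; rw [dist_match] at heq; omega
    · have hcomp := hA x hx y hy hxy
      rw [dist_lr hxy] at heq
      have e1 : (compPrism G).dist (.inl x) w = 1 := by omega
      have e2 : (compPrism G).dist w (.inr y) = 1 := by omega
      have ha1 := SimpleGraph.dist_eq_one_iff_adj.1 e1
      have hb1 := SimpleGraph.dist_eq_one_iff_adj.1 e2
      cases w with
      | inl z =>
        have hzy : z = y := adj_lr.1 hb1
        exact Or.inl ⟨y, hy, congrArg Sum.inl hzy.symm⟩
      | inr z =>
        have hxz : x = z := adj_lr.1 ha1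
        rw [← hxz] at hb1
        exact absurd (adj_rr'.1 hb1) (not_cadj_of_comp_ne hcomp)
  · -- inr x, inl y
    by_cases hxy : x = y
    · subst hxy
      have : (compPrism G).dist (Sum.inr x) (.inl x) = 1 := by
        rw [SimpleGraph.dist_comm]; exact dist_match x
      rw [this] at heq; omega
    · have hcomp := hA x hx y hy hxy
      have hd : (compPrism G).dist (Sum.inr x) (.inl y) = 2 := by
        rw [SimpleGraph.dist_comm]; exact dist_lr (fun e => hxy e.symm)
      rw [hd] at heq
      have e1 : (compPrism G).dist (Sum.inr x) w = 1 := by omega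
      have e2 : (compPrism G).dist w (.inl y) = 1 := by omega
      have ha1 := SimpleGraph.dist_eq_one_iff_adj.1 e1
      have hb1 := SimpleGraph.dist_eq_one_iff_adj.1 e2
      cases w with
      | inl z =>
        have hxz : x = z := adj_rl.1 ha1
        exact Or.inl ⟨x, hx, congrArg Sum.inl hxz⟩
      | inr z =>
        have hzy : z = y := adj_rl.1 hb1
        rw [hzy] at ha1
        exact absurd (adj_rr'.1 ha1) (not_cadj_of_comp_ne hcomp)
  · -- inr x, inr y
    by_cases hxy : x = y
    · subst hxy; rw [SimpleGraph.dist_self] at heq; omega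
    · have hcomp := hA x hx y hy hxy
      rw [dist_rr_three hcomp] at heq
      cases w with
      | inl z =>
        by_cases hzx : z = x
        · exact Or.inl ⟨x, hx, congrArg Sum.inl hzx.symm⟩
        by_cases hzy : z = y
        · exact Or.inl ⟨y, hy, congrArg Sum.inl hzy.symm⟩
        have e1 : (compPrism G).dist (Sum.inr x) (.inl z) = 2 := by
          rw [SimpleGraph.dist_comm]; exact dist_lr hzx
        have e2 : (compPrism G).dist (Sum.inl z) (.inr y) = 2 := dist_lr hzy
        rw [e1, e2] at heq
        omega
      | inr z =>
        have hzx : z ≠ x := fun e => hwa (by rw [e])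
        have hzy : z ≠ y := fun e => hwb (by rw [e])
        have hsplit : ((compPrism G).dist (.inr x) (.inr z) = 1 ∧
            (compPrism G).dist (.inr z) (.inr y) = 2) ∨
            ((compPrism G).dist (.inr x) (.inr z) = 2 ∧
            (compPrism G).dist (.inr z) (.inr y) = 1) := by omega
        rcases hsplit with ⟨e1, e2⟩ | ⟨e1, e2⟩
        · have hxz : Gᶜ.Adj x z := adj_rr'.1 (SimpleGraph.dist_eq_one_iff_adj.1 e1)
          obtain ⟨m, hm1, hm2⟩ := exists_mid_of_dist_two e2
          cases m with
          | inl m =>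
            exact absurd ((adj_rl.1 hm1).trans (adj_lr.1 hm2)) hzy
          | inr m =>
            have c1 := SimpleGraph.ConnectedComponent.connectedComponentMk_eq_of_adj
              (G := Gᶜ) (adj_rr'.1 hm1)
            have c2 := SimpleGraph.ConnectedComponent.connectedComponentMk_eq_of_adj
              (G := Gᶜ) (adj_rr'.1 hm2)
            have c0 := SimpleGraph.ConnectedComponent.connectedComponentMk_eq_of_adj
              (G := Gᶜ) hxz
            exact (hcomp (c0.trans (c1.trans c2))).elim
        · have hzy' : Gᶜ.Adj z y := adj_rr'.1 (SimpleGraph.dist_eq_one_iff_adj.1 e2)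
          obtain ⟨m, hm1, hm2⟩ := exists_mid_of_dist_two e1
          cases m with
          | inl m =>
            exact absurd ((adj_rl.1 hm1).trans (adj_lr.1 hm2)) (fun e => hzx e.symm)
          | inr m =>
            have c1 := SimpleGraph.ConnectedComponent.connectedComponentMk_eq_of_adj
              (G := Gᶜ) (adj_rr'.1 hm1)
            have c2 := SimpleGraph.ConnectedComponent.connectedComponentMk_eq_of_adj
              (G := Gᶜ) (adj_rr'.1 hm2)
            have c0 := SimpleGraph.ConnectedComponent.connectedComponentMk_eq_of_adj
              (G := Gᶜ) hzy'
            exact (hcomp ((c1.trans c2).trans c0)).elim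

end Conv

/-! ### hull membership steps -/

section Hull

variable (hconn : G.Connected)
include hconn

lemma mem_hull_left_of_rr {S : Set (V ⊕ V)} {u v : V}
    (hcomp : Gᶜ.connectedComponentMk u ≠ Gᶜ.connectedComponentMk v)
    (hu : Sum.inr u ∈ geoHull (compPrism G) S)
    (hv : Sum.inr v ∈ geoHull (compPrism G) S) :
    Sum.inl u ∈ geoHull (compPrism G) S := by
  apply isGeoConvex_geoHull (compPrism G) S _ hu _ hv
  refine Or.inr (Or.inr ⟨prism_preconnected hconn _ _, ?_⟩)
  have hne : u ≠ v := fun e => hcomp (by rw [e])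
  have e1 : (compPrism G).dist (Sum.inr u) (Sum.inl u) = 1 := by
    rw [SimpleGraph.dist_comm]; exact dist_match u
  rw [e1, dist_lr hne, dist_rr_three hcomp]

lemma mem_hull_left_mid (hex : ∀ C : Gᶜ.ConnectedComponent, ∃ D, D ≠ C)
    {S : Set (V ⊕ V)} {u v w : V} (hne : u ≠ v) (hna : ¬ G.Adj u v)
    (h1 : G.Adj u w) (h2 : G.Adj w v)
    (hu : Sum.inl u ∈ geoHull (compPrism G) S)
    (hv : Sum.inl v ∈ geoHull (compPrism G) S) :
    Sum.inl w ∈ geoHull (compPrism G) S := by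
  apply isGeoConvex_geoHull (compPrism G) S _ hu _ hv
  refine Or.inr (Or.inr ⟨prism_preconnected hconn _ _, ?_⟩)
  rw [SimpleGraph.dist_eq_one_iff_adj.2 (adj_ll.2 h1),
    SimpleGraph.dist_eq_one_iff_adj.2 (adj_ll.2 h2), dist_ll_two hex hne hna]

lemma mem_hull_right_step {S : Set (V ⊕ V)} {u v : V} (hne : u ≠ v)
    (hcadj : Gᶜ.Adj u v)
    (hu : Sum.inl u ∈ geoHull (compPrism G) S)
    (hv : Sum.inr v ∈ geoHull (compPrism G) S) :
    Sum.inr u ∈ geoHull (compPrism G) S := by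
  apply isGeoConvex_geoHull (compPrism G) S _ hu _ hv
  refine Or.inr (Or.inr ⟨prism_preconnected hconn _ _, ?_⟩)
  rw [dist_match u, SimpleGraph.dist_eq_one_iff_adj.2 (adj_rr'.2 hcadj), dist_lr hne]

end Hull

lemma exists_other_in_supp {C : Gᶜ.ConnectedComponent} (h : C.supp.Nontrivial)
    {u : V} : ∃ y, y ∈ C.supp ∧ y ≠ u := by
  obtain ⟨a, ha, b, hb, hab⟩ := h
  by_cases hau : a = u
  · exact ⟨b, hb, fun e => hab (by rw [hau, e])⟩
  · exact ⟨a, ha, hau⟩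

lemma exists_cnbr_of_nontrivial {C : Gᶜ.ConnectedComponent} (h : C.supp.Nontrivial)
    {u : V} (hu : Gᶜ.connectedComponentMk u = C) : ∃ z, Gᶜ.Adj u z := by
  obtain ⟨y, hy, hyne⟩ := exists_other_in_supp h (u := u)
  rw [SimpleGraph.ConnectedComponent.mem_supp_iff] at hy
  have hreach : Gᶜ.Reachable u y := SimpleGraph.ConnectedComponent.exact (hu.trans hy.symm)
  exact exists_cnbr_of_reachable_ne hreach (fun e => hyne e.symm)

end CPaux

open CPaux in
theorem hullNumber_compPrism_cograph_many_nontrivial {V : Type*} [Fintype V]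
    (G : SimpleGraph V) (k t : ℕ) (hconn : G.Connected) (hcog : IsCograph G)
    (hk : k = Nat.card {C : Gᶜ.ConnectedComponent // C.supp.Nontrivial})
    (hk2 : 2 ≤ k)
    (ht : t = Nat.card {C : Gᶜ.ConnectedComponent // ¬ C.supp.Nontrivial}) :
    hullNumber (compPrism G) = k + t + 1 := by
  classical
  have hkt : k + t = Nat.card Gᶜ.ConnectedComponent := by
    rw [hk, ht, ← Nat.card_sum]
    exact Nat.card_congr (Equiv.sumCompl
      (fun C : Gᶜ.ConnectedComponent => C.supp.Nontrivial))
  -- two distinct nontrivial components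
  have hnontriv : Nontrivial {C : Gᶜ.ConnectedComponent // C.supp.Nontrivial} := by
    rw [← Finite.one_lt_card_iff_nontrivial]; omega
  obtain ⟨⟨C1, hC1⟩, ⟨C2, hC2⟩, hC12⟩ := hnontriv.exists_pair_ne
  have hC12' : C1 ≠ C2 := fun e => hC12 (Subtype.ext e)
  have hex : ∀ C : Gᶜ.ConnectedComponent, ∃ D, D ≠ C := by
    intro C
    by_cases h : C = C1
    · exact ⟨C2, fun e => hC12' (by rw [← h, e])⟩
    · exact ⟨C1, fun e => h e.symm⟩
  have hrep : ∀ C : Gᶜ.ConnectedComponent,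
      Gᶜ.connectedComponentMk (Quot.out C) = C := fun C => Quot.out_eq C
  have hout_inj : Function.Injective (Quot.out : Gᶜ.ConnectedComponent → V) := by
    intro C D h
    rw [← hrep C, ← hrep D, h]
  -- the special vertex v1
  obtain ⟨v1, hv1adj⟩ := exists_cnbr_of_nontrivial hC1 (hrep C1)
  have hv1comp : Gᶜ.connectedComponentMk v1 = C1 :=
    (SimpleGraph.ConnectedComponent.connectedComponentMk_eq_of_adj
      (G := Gᶜ) hv1adj).symm.trans (hrep C1)
  have hu1v1ne : Quot.out C1 ≠ v1 := hv1adj.ne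
  have hu1v1na : ¬ G.Adj (Quot.out C1) v1 := ((G.compl_adj _ _).1 hv1adj).2
  -- the hull set
  set S : Set (V ⊕ V) :=
    Sum.inr '' insert v1 (Set.range (Quot.out : Gᶜ.ConnectedComponent → V)) with hS
  have hv1notin : v1 ∉ Set.range (Quot.out : Gᶜ.ConnectedComponent → V) := by
    rintro ⟨C, hC⟩
    have hCC : C = C1 := by rw [← hv1comp, ← hC]; exact (hrep C).symm
    rw [hCC] at hC
    exact hu1v1ne hC
  have hScard : S.ncard = k + t + 1 := by
    rw [hS, Set.ncard_image_of_injective _ Sum.inr_injective,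
      Set.ncard_insert_of_notMem hv1notin (Set.toFinite _),
      ← Nat.card_coe_set_eq, Nat.card_range_of_injective hout_inj, hkt]
    rfl
  -- S is a hull set
  have hSin : ∀ x ∈ insert v1 (Set.range (Quot.out : Gᶜ.ConnectedComponent → V)),
      Sum.inr x ∈ geoHull (compPrism G) S :=
    fun x hx => subset_geoHull (compPrism G) S ⟨x, hx, rfl⟩
  have hrin : ∀ C : Gᶜ.ConnectedComponent,
      Sum.inr (Quot.out C) ∈ geoHull (compPrism G) S :=
    fun C => hSin _ (Set.mem_insert_of_mem _ ⟨C, rfl⟩)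
  have hrv1 : Sum.inr v1 ∈ geoHull (compPrism G) S := hSin _ (Set.mem_insert _ _)
  have hlrep : ∀ C : Gᶜ.ConnectedComponent,
      Sum.inl (Quot.out C) ∈ geoHull (compPrism G) S := by
    intro C
    obtain ⟨D, hD⟩ := hex C
    refine mem_hull_left_of_rr hconn ?_ (hrin C) (hrin D)
    rw [hrep C, hrep D]
    exact fun e => hD e.symm
  have hlv1 : Sum.inl v1 ∈ geoHull (compPrism G) S := by
    refine mem_hull_left_of_rr hconn ?_ hrv1 (hrin C2)
    rw [hv1comp, hrep C2]
    exact hC12'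
  have hlu1 : Sum.inl (Quot.out C1) ∈ geoHull (compPrism G) S := hlrep C1
  have hLout : ∀ w, Gᶜ.connectedComponentMk w ≠ C1 →
      Sum.inl w ∈ geoHull (compPrism G) S := by
    intro w hw
    have h1 : G.Adj (Quot.out C1) w :=
      adj_of_comp_ne (by rw [hrep C1]; exact fun e => hw e.symm)
    have h2 : G.Adj w v1 := adj_of_comp_ne (by rw [hv1comp]; exact hw)
    exact mem_hull_left_mid hconn hex hu1v1ne hu1v1na h1 h2 hlu1 hlv1
  have hLin : ∀ w, Gᶜ.connectedComponentMk w = C1 →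
      Sum.inl w ∈ geoHull (compPrism G) S := by
    intro w hw
    obtain ⟨z2, hz2adj⟩ := exists_cnbr_of_nontrivial hC2 (hrep C2)
    have hz2comp : Gᶜ.connectedComponentMk z2 = C2 :=
      (SimpleGraph.ConnectedComponent.connectedComponentMk_eq_of_adj
        (G := Gᶜ) hz2adj).symm.trans (hrep C2)
    have hlz2 : Sum.inl z2 ∈ geoHull (compPrism G) S :=
      hLout z2 (by rw [hz2comp]; exact Ne.symm hC12')
    have h1 : G.Adj (Quot.out C2) w :=
      adj_of_comp_ne (by rw [hrep C2, hw]; exact Ne.symm hC12')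
    have h2 : G.Adj w z2 :=
      adj_of_comp_ne (by rw [hw, hz2comp]; exact hC12')
    exact mem_hull_left_mid hconn hex hz2adj.ne ((G.compl_adj _ _).1 hz2adj).2
      h1 h2 (hlrep C2) hlz2
  have hL : ∀ w, Sum.inl w ∈ geoHull (compPrism G) S := by
    intro w
    by_cases h : Gᶜ.connectedComponentMk w = C1
    · exact hLin w h
    · exact hLout w h
  have hR : ∀ x, Sum.inr x ∈ geoHull (compPrism G) S := by
    have key : ∀ a b : V, Gᶜ.Walk a b → Sum.inr a ∈ geoHull (compPrism G) S →
        Sum.inr b ∈ geoHull (compPrism G) S := by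
      intro a b p
      induction p with
      | nil => exact id
      | @cons a c b h q ih =>
        intro ha
        exact ih (mem_hull_right_step hconn h.ne.symm h.symm (hL c) ha)
    intro x
    obtain ⟨p⟩ : Gᶜ.Reachable (Quot.out (Gᶜ.connectedComponentMk x)) x :=
      SimpleGraph.ConnectedComponent.exact (hrep _)
    exact key _ _ p (hrin _)
  have hShull : IsHullSet (compPrism G) S := by
    rw [IsHullSet, Set.eq_univ_iff_forall]
    rintro (w | x)
    · exact hL w
    · exact hR x
  -- conclude
  apply le_antisymm
  · exact Nat.sInf_le ⟨S, hScard, hShull⟩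
  · refine le_csInf ⟨k + t + 1, S, hScard, hShull⟩ ?_
    rintro n ⟨T, hTcard, hThull⟩
    -- every hull set meets every right component copy
    have hmeet : ∀ C : Gᶜ.ConnectedComponent,
        ∃ x, Gᶜ.connectedComponentMk x = C ∧ Sum.inr x ∈ T := by
      intro C
      by_contra hcon
      push_neg at hcon
      have hsub2 : T ⊆ (Sum.inr '' C.supp)ᶜ := by
        rintro s hs ⟨x, hxs, rfl⟩
        exact hcon x hxs hs
      have hsub3 := geoHull_min (conv_compl_supp hconn hex C) hsub2
      rw [hThull] at hsub3
      exact hsub3 (Set.mem_univ (Sum.inr (Quot.out C))) ⟨_, hrep C, rfl⟩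
    choose xc hxc1 hxc2 using hmeet
    set φ : Gᶜ.ConnectedComponent → T := fun C => ⟨Sum.inr (xc C), hxc2 C⟩ with hφ
    have hφinj : Function.Injective φ := by
      intro C D h
      have hxcd : xc C = xc D := Sum.inr_injective (congrArg Subtype.val h)
      rw [← hxc1 C, ← hxc1 D, hxcd]
    have hcard1 : k + t ≤ n := by
      rw [hkt, ← hTcard, ← Nat.card_coe_set_eq]
      exact Nat.card_le_card_of_injective φ hφinj
    by_contra hlt
    push_neg at hlt
    have hneq : n = k + t := by omega
    have hφbij : Function.Bijective φ := by
      refine (Nat.bijective_iff_injective_and_card φ).2 ⟨hφinj, ?_⟩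
      rw [Nat.card_coe_set_eq, hTcard, hneq, hkt]
    set A : Set V := {x : V | Sum.inr x ∈ T} with hA
    have hmemA : ∀ x ∈ A, ∃ C, xc C = x ∧ Gᶜ.connectedComponentMk x = C := by
      intro x hx
      obtain ⟨C, hC⟩ := hφbij.2 ⟨Sum.inr x, hx⟩
      have : Sum.inr (xc C) = Sum.inr x := congrArg Subtype.val hC
      have hxcx : xc C = x := Sum.inr_injective this
      exact ⟨C, hxcx, by rw [← hxcx]; exact hxc1 C⟩
    have hApair : ∀ x ∈ A, ∀ y ∈ A, x ≠ y →
        Gᶜ.connectedComponentMk x ≠ Gᶜ.connectedComponentMk y := by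
      intro x hx y hy hxy
      obtain ⟨C, hCx, hCx'⟩ := hmemA x hx
      obtain ⟨D, hDy, hDy'⟩ := hmemA y hy
      rw [hCx', hDy']
      intro e
      exact hxy (by rw [← hCx, ← hDy, e])
    have hTsub : T ⊆ Sum.inl '' A ∪ Sum.inr '' A := by
      intro s hs
      obtain ⟨C, hC⟩ := hφbij.2 ⟨s, hs⟩
      have hsC : Sum.inr (xc C) = s := congrArg Subtype.val hC
      refine Or.inr ⟨xc C, ?_, hsC⟩
      show Sum.inr (xc C) ∈ T
      rw [hsC]; exact hs
    have huniv := geoHull_min (conv_pair hconn hApair) hTsub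
    rw [hThull] at huniv
    -- find a vertex outside
    obtain ⟨y, hysupp, hyne⟩ := exists_other_in_supp hC1 (u := xc C1)
    have : Sum.inl y ∈ Sum.inl '' A ∪ Sum.inr '' A := huniv (Set.mem_univ _)
    rcases this with ⟨z, hz, hze⟩ | ⟨z, hz, hze⟩
    · have hzy : z = y := Sum.inl_injective hze
      rw [hzy] at hz
      obtain ⟨D, hDy, hDy'⟩ := hmemA y hz
      rw [SimpleGraph.ConnectedComponent.mem_supp_iff] at hysupp
      rw [hysupp] at hDy'
      rw [← hDy'] at hDy
      exact hyne (by rw [← hDy])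
    · exact (Sum.inr_ne_inl hze).elim
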